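/- For real symmetric matrices A and B, the spectral norm (operator 2-norm) of AB + BA is at most the spectral norm of A^2 + B^2. -/

import Mathlib

open scoped Matrix.Norms.L2Operator

open RealInnerProductSpace in
/-- For a symmetric operator on a real inner product space, a bound on the quadratic form
gives a bound on the operator norm. -/
lemma aux_norm_le {E : Type*} [NormedAddCommGroup E] [InnerProductSpace ℝ E]
    (T : E →L[ℝ] E) (hT : ∀ x y : E, ⟪T x, y⟫ = ⟪x, T y⟫) {r : ℝ} (hr : 0 ≤ r)
    (h : ∀ z : E, |⟪T z, z⟫| ≤ r * ‖z‖ ^ 2) : ‖T‖ ≤ r := by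
  have key : ∀ u v : E, ⟪T u, v⟫ ≤ r * ((‖u‖ ^ 2 + ‖v‖ ^ 2) / 2) := by
    intro u v
    have h1 : ⟪T v, u⟫ = ⟪T u, v⟫ := by rw [hT v u, real_inner_comm]
    have e1 : ⟪T (u + v), u + v⟫ = ⟪T u, u⟫ + ⟪T u, v⟫ + ⟪T v, u⟫ + ⟪T v, v⟫ := by
      simp [map_add, inner_add_left, inner_add_right]; ring
    have e2 : ⟪T (u - v), u - v⟫ = ⟪T u, u⟫ - ⟪T u, v⟫ - ⟪T v, u⟫ + ⟪T v, v⟫ := by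
      simp [map_sub, inner_sub_left, inner_sub_right]; ring
    have b1 : ⟪T (u + v), u + v⟫ ≤ r * ‖u + v‖ ^ 2 := (abs_le.mp (h (u + v))).2
    have b2 : -(r * ‖u - v‖ ^ 2) ≤ ⟪T (u - v), u - v⟫ := (abs_le.mp (h (u - v))).1
    have par : ‖u + v‖ ^ 2 + ‖u - v‖ ^ 2 = 2 * (‖u‖ ^ 2 + ‖v‖ ^ 2) := by
      have p1 := norm_add_sq_real u v
      have p2 := norm_sub_sq_real u v
      linarith
    nlinarith [b1, b2, e1, e2, h1, par]
  refine T.opNorm_le_bound hr fun x => ?_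
  by_cases hx : T x = 0
  · simp [hx]
    positivity
  have hTx : (0 : ℝ) < ‖T x‖ := norm_pos_iff.mpr hx
  have hx0 : x ≠ 0 := by rintro rfl; simp at hx
  have hxn : (0 : ℝ) < ‖x‖ := norm_pos_iff.mpr hx0
  have hyn : ‖(‖x‖ / ‖T x‖) • T x‖ = ‖x‖ := by
    rw [norm_smul, Real.norm_eq_abs, abs_of_nonneg (by positivity)]
    field_simp
  have hinner : ⟪T x, (‖x‖ / ‖T x‖) • T x⟫ = ‖x‖ * ‖T x‖ := by
    rw [real_inner_smul_right, real_inner_self_eq_norm_sq]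
    field_simp
  have := key x ((‖x‖ / ‖T x‖) • T x)
  rw [hinner, hyn] at this
  have : ‖x‖ * ‖T x‖ ≤ r * ‖x‖ ^ 2 := by nlinarith
  nlinarith

set_option maxHeartbeats 1000000 in
open RealInnerProductSpace in
theorem stmt1 {d : ℕ} (A B : Matrix (Fin d) (Fin d) ℝ)
    (hA : A.IsSymm) (hB : B.IsSymm) :
    ‖A * B + B * A‖ ≤ ‖A ^ 2 + B ^ 2‖ := by
  have hA' : star A = A := by
    rw [Matrix.star_eq_conjTranspose, Matrix.conjTranspose_eq_transpose_of_trivial]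
    exact hA
  have hB' : star B = B := by
    rw [Matrix.star_eq_conjTranspose, Matrix.conjTranspose_eq_transpose_of_trivial]
    exact hB
  set f := Matrix.toEuclideanCLM (𝕜 := ℝ) (n := Fin d) with hf
  set S := f A with hS
  set T := f B with hT
  have hSstar : star S = S := by rw [hS, ← map_star, hA']
  have hTstar : star T = T := by rw [hT, ← map_star, hB']
  -- rewrite the goal in terms of CLMs
  rw [Matrix.cstar_norm_def, Matrix.cstar_norm_def, map_add, map_mul, map_mul,
    map_add, map_pow, map_pow, ← hf, ← hS, ← hT]
  set U := S * T + T * S with hU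
  set D := S ^ 2 + T ^ 2 with hD
  -- self-adjointness facts
  have hUstar : star U = U := by
    rw [hU]; erw [star_add]; rw [star_mul, star_mul, hSstar, hTstar, add_comm]
  have hDstar : star D = D := by
    rw [hD]; erw [star_add]; rw [star_pow, star_pow, hSstar, hTstar]
  have adj_inner : ∀ (V : EuclideanSpace ℝ (Fin d) →L[ℝ] EuclideanSpace ℝ (Fin d)),
      star V = V → ∀ x y, ⟪V x, y⟫ = ⟪x, V y⟫ := by
    intro V hV x y
    conv_lhs => rw [← hV]
    rw [ContinuousLinearMap.star_eq_adjoint, ContinuousLinearMap.adjoint_inner_left]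
  -- quadratic forms of squares of self-adjoint operators are nonneg
  have sq_nonneg' : ∀ (V : EuclideanSpace ℝ (Fin d) →L[ℝ] EuclideanSpace ℝ (Fin d)),
      star V = V → ∀ z, (0 : ℝ) ≤ ⟪(V * V) z, z⟫ := by
    intro V hV z
    have : ⟪(V * V) z, z⟫ = ⟪V z, V z⟫ := by
      rw [ContinuousLinearMap.mul_apply]
      exact adj_inner V hV (V z) z
    rw [this]
    exact real_inner_self_nonneg
  have hPQ1 : (S + T) * (S + T) = D + U := by
    rw [hD, hU]; simp only [add_mul, mul_add, sq]; abel
  have hPQ2 : (S - T) * (S - T) = D - U := by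
    rw [hD, hU]; simp only [sub_mul, mul_sub, sq]; abel
  have hPstar : star (S + T) = S + T := by erw [star_add]; rw [hSstar, hTstar]
  have hQstar : star (S - T) = S - T := by rw [sub_eq_add_neg]; erw [star_add]; rw [star_neg, hSstar, hTstar, ← sub_eq_add_neg]
  refine aux_norm_le U (adj_inner U hUstar) (norm_nonneg D) fun z => ?_
  have hDz : ⟪D z, z⟫ ≤ ‖D‖ * ‖z‖ ^ 2 := by
    calc ⟪D z, z⟫ ≤ ‖D z‖ * ‖z‖ := real_inner_le_norm _ _
    _ ≤ ‖D‖ * ‖z‖ * ‖z‖ := by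
        have := D.le_opNorm z
        nlinarith [norm_nonneg z, norm_nonneg (D z)]
    _ = ‖D‖ * ‖z‖ ^ 2 := by ring
  have h1 : (0 : ℝ) ≤ ⟪(D + U) z, z⟫ := hPQ1 ▸ sq_nonneg' _ hPstar z
  have h2 : (0 : ℝ) ≤ ⟪(D - U) z, z⟫ := hPQ2 ▸ sq_nonneg' _ hQstar z
  have e1 : ⟪(D + U) z, z⟫ = ⟪D z, z⟫ + ⟪U z, z⟫ := by
    simp [ContinuousLinearMap.add_apply, inner_add_left]
  have e2 : ⟪(D - U) z, z⟫ = ⟪D z, z⟫ - ⟪U z, z⟫ := by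
    simp [ContinuousLinearMap.sub_apply, inner_sub_left]
  rw [abs_le]
  constructor <;> nlinarith
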